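/- Define the q-Hermite polynomials by H_n(x;q) = Σ_{k=0}^{⌊n/2⌋} (-1)^k q^{k(k-1)} [n choose 2k]_q M_q(2k-1) x^{n-2k}. Then D_q H_n(x;q) = [n]_q H_{n-1}(x;q) for all n ≥ 1, where D_q is the q-derivative (D_q x^m = [m]_q x^{m-1}). -/

import Mathlib

open Polynomial Finset
noncomputable section
abbrev Fq : Type := RatFunc ℚ
def qv : Fq := RatFunc.X
def qint (n : ℕ) : Fq := ∑ i ∈ Finset.range n, qv ^ i
def qfact (n : ℕ) : Fq := ∏ i ∈ Finset.range n, qint (i + 1)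
def qbinom (n k : ℕ) : Fq := if k ≤ n then qfact n / (qfact k * qfact (n - k)) else 0
def qint2 (n : ℕ) : Fq := ∑ i ∈ Finset.range n, qv ^ (2 * i)
def qfact2 (n : ℕ) : Fq := ∏ i ∈ Finset.range n, qint2 (i + 1)
def qbinom2 (n k : ℕ) : Fq := if k ≤ n then qfact2 n / (qfact2 k * qfact2 (n - k)) else 0
def Modd (k : ℕ) : Fq := ∏ j ∈ Finset.range k, qint (2 * j + 1)

def Dq (p : Polynomial Fq) : Polynomial Fq :=
  p.sum fun m a => Polynomial.C (a * qint m) * Polynomial.X ^ (m - 1)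

def Hexp (n : ℕ) : Polynomial Fq :=
  ∑ k ∈ Finset.range (n / 2 + 1),
    Polynomial.C ((-1) ^ k * qv ^ (k * (k - 1)) * qbinom n (2 * k) * Modd k) *
      Polynomial.X ^ (n - 2 * k)

lemma qint_eq (n : ℕ) :
    qint n = algebraMap (Polynomial ℚ) Fq (∑ i ∈ Finset.range n, Polynomial.X ^ i) := by
  simp [qint, qv, map_sum, map_pow, RatFunc.algebraMap_X]

lemma qint_ne_zero {n : ℕ} (h : 0 < n) : qint n ≠ 0 := by
  rw [qint_eq]
  apply RatFunc.algebraMap_ne_zero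
  intro h0
  have := congrArg (Polynomial.eval 1) h0
  simp at this
  omega

lemma qfact_ne_zero (n : ℕ) : qfact n ≠ 0 := by
  rw [qfact]
  exact Finset.prod_ne_zero_iff.2 fun i _ => qint_ne_zero (Nat.succ_pos i)

lemma qfact_succ (n : ℕ) : qfact (n + 1) = qfact n * qint (n + 1) :=
  Finset.prod_range_succ _ _

lemma key (n k : ℕ) (hn : 1 ≤ n) :
    qbinom n (2 * k) * qint (n - 2 * k) = qint n * qbinom (n - 1) (2 * k) := by
  by_cases h : 2 * k ≤ n - 1
  · obtain ⟨m, rfl⟩ : ∃ m, n = m + 1 := ⟨n - 1, by omega⟩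
    simp only [Nat.add_sub_cancel] at h ⊢
    rw [qbinom, if_pos (by omega), qbinom, if_pos h]
    have h1 : m + 1 - 2 * k = (m - 2 * k) + 1 := by omega
    rw [h1, qfact_succ, qfact_succ]
    have e1 : qfact (2 * k) ≠ 0 := qfact_ne_zero _
    have e2 : qfact (m - 2 * k) ≠ 0 := qfact_ne_zero _
    have e3 : qint (m - 2 * k + 1) ≠ 0 := qint_ne_zero (Nat.succ_pos _)
    field_simp
  · by_cases h2 : 2 * k ≤ n
    · have h3 : n - 2 * k = 0 := by omega
      rw [h3]
      simp [qint, qbinom, if_neg h]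
    · rw [qbinom, if_neg h2, qbinom, if_neg (by omega)]
      ring

lemma Dq_add (p q : Polynomial Fq) : Dq (p + q) = Dq p + Dq q :=
  Polynomial.sum_add_index p q _ (fun m => by simp)
    (fun m a b => by rw [add_mul, map_add, add_mul])

lemma Dq_sum {ι : Type*} (s : Finset ι) (f : ι → Polynomial Fq) :
    Dq (∑ i ∈ s, f i) = ∑ i ∈ s, Dq (f i) := by
  classical
  induction s using Finset.induction_on with
  | empty => simp [Dq]
  | insert a s ha ih => simp [Finset.sum_insert ha, Dq_add, ih]

lemma Dq_C_mul_X_pow (a : Fq) (m : ℕ) :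
    Dq (Polynomial.C a * Polynomial.X ^ m)
      = Polynomial.C (a * qint m) * Polynomial.X ^ (m - 1) := by
  rw [Polynomial.C_mul_X_pow_eq_monomial, Dq,
    Polynomial.sum_monomial_index _ _ (by simp)]

/-- The q-derivative lowers the q-Hermite polynomials: . -/
theorem stmt_3 (n : ℕ) (hn : 1 ≤ n) :
    Dq (Hexp n) = Polynomial.C (qint n) * Hexp (n - 1) := by
  have hsub : Finset.range ((n - 1) / 2 + 1) ⊆ Finset.range (n / 2 + 1) :=
    Finset.range_subset_range.2 (by omega)
  rw [Hexp, Dq_sum]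
  simp only [Dq_C_mul_X_pow]
  rw [Hexp, Finset.mul_sum,
    ← Finset.sum_subset hsub (by
      intro k hk hk2
      simp only [Finset.mem_range] at hk hk2
      rcases le_or_gt (2 * k) n with h2 | h2
      · have h3 : n - 2 * k = 0 := by omega
        simp [h3, qint]
      · simp [qbinom, not_le.2 h2])]
  apply Finset.sum_congr rfl
  intro k hk
  have hx : n - 2 * k - 1 = n - 1 - 2 * k := by omega
  rw [hx]
  have h := key n k hn
  have hc : (-1 : Fq) ^ k * qv ^ (k * (k - 1)) * qbinom n (2 * k) * Modd k * qint (n - 2 * k)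
      = qint n * ((-1) ^ k * qv ^ (k * (k - 1)) * qbinom (n - 1) (2 * k) * Modd k) := by
    linear_combination ((-1 : Fq) ^ k * qv ^ (k * (k - 1)) * Modd k) * h
  rw [hc, Polynomial.C_mul, mul_assoc]
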